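/- (KKT conditions) Let n : ℕ and let z : Fin n → ℂ have pairwise distinct values and be admissible. Suppose z is a local maximizer of Δ on the feasible set S = { w : Fin n → ℂ | dist (w i) (w j) ≤ 2 for all i, j }, i.e. IsLocalMaxOn Δ S z. Then there exists a symmetric function λ : Fin n → Fin n → ℝ with λ i j ≥ 0 for all i, j, such that λ i j = 0 whenever dist (z i) (z j) < 2, and for every index k: Σ_{j ≠ k} (z j − z k)⁻¹ = Σ_{j ≠ k} (λ k j : ℂ) · (conj (z j) − conj (z k)), where conj denotes complex conjugation. -/

import Mathlib

noncomputable def Bform (n : ℕ) (u v : Fin n → ℂ) : ℝ :=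
  ∑ k, ((starRingEnd ℂ) (u k) * v k).re

lemma hre (x y : ℂ) : ((starRingEnd ℂ) x * y).re = x.re * y.re + x.im * y.im := by
  simp [Complex.mul_re]

lemma Bform_add_left (n : ℕ) (x y v : Fin n → ℂ) :
    Bform n (x + y) v = Bform n x v + Bform n y v := by
  unfold Bform
  rw [← Finset.sum_add_distrib]
  refine Finset.sum_congr rfl fun k _ => ?_
  simp only [Pi.add_apply, hre, Complex.add_re, Complex.add_im]
  ring

lemma Bform_smul_left (n : ℕ) (c : ℝ) (x v : Fin n → ℂ) :
    Bform n (c • x) v = c * Bform n x v := by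
  unfold Bform
  rw [Finset.mul_sum]
  refine Finset.sum_congr rfl fun k _ => ?_
  simp only [Pi.smul_apply, hre, Complex.real_smul, Complex.mul_re, Complex.mul_im,
    Complex.ofReal_re, Complex.ofReal_im, map_mul, Complex.conj_ofReal, Complex.conj_re,
    Complex.conj_im]
  ring

lemma Bform_symm (n : ℕ) (x y : Fin n → ℂ) : Bform n x y = Bform n y x := by
  unfold Bform
  refine Finset.sum_congr rfl fun k _ => ?_
  rw [hre, hre]; ring

lemma Bform_def (n : ℕ) (x : Fin n → ℂ) (h : Bform n x x ≤ 0) : x = 0 := by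
  have hterm : ∀ k, ((starRingEnd ℂ) (x k) * x k).re = Complex.normSq (x k) := by
    intro k; rw [hre, Complex.normSq_apply]
  have hnn : ∀ k ∈ Finset.univ, 0 ≤ ((starRingEnd ℂ) (x k) * x k).re := by
    intro k _; rw [hterm]; exact Complex.normSq_nonneg _
  have h0 : Bform n x x = 0 := le_antisymm h (Finset.sum_nonneg hnn)
  funext k
  have := (Finset.sum_eq_zero_iff_of_nonneg hnn).mp h0 k (Finset.mem_univ k)
  rw [hterm] at this
  simpa using Complex.normSq_eq_zero.mp this

lemma Bform_add_right (n : ℕ) (x y v : Fin n → ℂ) :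
    Bform n v (x + y) = Bform n v x + Bform n v y := by
  rw [Bform_symm, Bform_add_left, Bform_symm n x v, Bform_symm n y v]

lemma Bform_smul_right (n : ℕ) (c : ℝ) (x v : Fin n → ℂ) :
    Bform n v (c • x) = c * Bform n v x := by
  rw [Bform_symm, Bform_smul_left, Bform_symm n x v]

lemma normSq_line (a b : ℂ) (t : ℝ) :
    Complex.normSq (a + (t : ℂ) * b) =
      Complex.normSq a + (2 * ((starRingEnd ℂ) a * b).re) * t + Complex.normSq b * t ^ 2 := by
  simp only [Complex.normSq_apply, Complex.add_re, Complex.add_im, Complex.mul_re, Complex.mul_im,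
    Complex.ofReal_re, Complex.ofReal_im, hre, Complex.conj_re, Complex.conj_im]
  ring

lemma hasDerivAt_normSq_line (a b : ℂ) :
    HasDerivAt (fun t : ℝ => Complex.normSq (a + (t : ℂ) * b))
      (2 * ((starRingEnd ℂ) a * b).re) 0 := by
  have h : (fun t : ℝ => Complex.normSq (a + (t : ℂ) * b)) =
      fun t : ℝ => Complex.normSq a + (2 * ((starRingEnd ℂ) a * b).re) * t
        + Complex.normSq b * t ^ 2 := funext fun t => normSq_line a b t
  rw [h]
  have h1 : HasDerivAt (fun t : ℝ => Complex.normSq a + (2 * ((starRingEnd ℂ) a * b).re) * t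
      + Complex.normSq b * t ^ 2)
      (0 + (2 * ((starRingEnd ℂ) a * b).re) * 1 + Complex.normSq b * (2 * 0 ^ 1)) 0 := by
    exact ((hasDerivAt_const 0 _).add (((hasDerivAt_id 0).const_mul _))).add
      ((hasDerivAt_pow 2 0).const_mul _)
  simpa using h1

lemma dist_le_two_iff (x y : ℂ) : dist x y ≤ 2 ↔ Complex.normSq (x - y) ≤ 4 := by
  rw [Complex.dist_eq, ← Complex.sq_norm]
  constructor
  · intro h; nlinarith [norm_nonneg (x - y)]
  · intro h; nlinarith [norm_nonneg (x - y)]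

lemma dist_eq_two_normSq {x y : ℂ} (h : dist x y = 2) : Complex.normSq (x - y) = 4 := by
  rw [← Complex.sq_norm, ← Complex.dist_eq, h]; norm_num

lemma dist_lt_two_normSq {x y : ℂ} (h : dist x y < 2) : Complex.normSq (x - y) < 4 := by
  rw [← Complex.sq_norm, ← Complex.dist_eq]
  nlinarith [dist_nonneg (x := x) (y := y)]

section Farkas
variable {E : Type*} [AddCommGroup E] [Module ℝ E]

theorem myFarkas (B : E → E → ℝ)
    (hadd : ∀ x y v, B (x + y) v = B x v + B y v)
    (hsmul : ∀ (c : ℝ) x v, B (c • x) v = c * B x v)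
    (hsymm : ∀ x y, B x y = B y x)
    (hdef : ∀ x, B x x ≤ 0 → x = 0) :
    ∀ (m : ℕ) (a : Fin m → E) (b : E),
      (∀ v, (∀ i, B (a i) v ≤ 0) → B b v ≤ 0) →
      ∃ μ : Fin m → ℝ, (∀ i, 0 ≤ μ i) ∧ b = ∑ i, μ i • (a i) := by
  have hzero : ∀ v, B 0 v = 0 := by
    intro v
    have := hsmul 0 0 v
    simpa using this
  have hsub : ∀ x y v, B (x - y) v = B x v - B y v := by
    intro x y v
    have h := hadd (x - y) y v
    rw [sub_add_cancel] at h
    linarith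
  have hsum : ∀ {ι : Type} (s : Finset ι) (f : ι → E) (v), B (∑ i ∈ s, f i) v = ∑ i ∈ s, B (f i) v := by
    intro ι s f v
    induction s using Finset.cons_induction with
    | empty => simpa using hzero v
    | cons j t hni ih => rw [Finset.sum_cons, Finset.sum_cons, hadd, ih]
  intro m
  induction m with
  | zero =>
    intro a b hb
    refine ⟨0, fun i => le_refl _, ?_⟩
    have : B b b ≤ 0 := hb b (fun i => i.elim0)
    simpa using hdef b this
  | succ m ih =>
    intro a b hb
    set A : Fin m → E := Fin.init a with hA
    set aL : E := a (Fin.last m) with haL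
    by_cases hex : ∃ w, (∀ i : Fin m, B (A i) w ≤ 0) ∧ 0 < B b w
    · obtain ⟨w, hw, hbw⟩ := hex
      have hLw : 0 < B aL w := by
        by_contra h
        push_neg at h
        have : B b w ≤ 0 := by
          refine hb w ?_
          intro i
          refine Fin.lastCases ?_ ?_ i
          · exact h
          · intro j; exact hw j
        linarith
      set s : ℝ := B aL w with hs
      set A' : Fin m → E := fun i => A i - (B (A i) w / s) • aL with hA'
      set b' : E := b - (B b w / s) • aL with hb'
      have key : ∀ v, (∀ i, B (A' i) v ≤ 0) → B b' v ≤ 0 := by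
        intro v hv
        set v' : E := v - (B aL v / s) • w with hv'
        have e1 : ∀ x : E, B x v' = B x v - (B aL v / s) * B x w := by
          intro x
          rw [hv', hsymm x, hsub, hsmul, hsymm v x, hsymm w x]
        have h2 : ∀ i : Fin m, B (A i) v' ≤ 0 := by
          intro i
          have := hv i
          rw [hA'] at this
          rw [e1]
          rw [hsub, hsmul] at this
          have hring : B (A i) w / s * B aL v = B aL v / s * B (A i) w := by ring
          linarith
        have h3 : B aL v' = 0 := by
          rw [e1]
          field_simp
          rw [← hs]; ring
        have h4 : B b v' ≤ 0 := by
          refine hb v' ?_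
          intro i
          refine Fin.lastCases ?_ ?_ i
          · exact le_of_eq h3
          · intro j; exact h2 j
        rw [hb', hsub, hsmul]
        rw [e1] at h4
        have hring : B aL v / s * B b w = B b w / s * B aL v := by ring
        linarith
      obtain ⟨μ, hμ0, hμ⟩ := ih A' b' key
      set c : ℝ := B b w / s - ∑ i, μ i * (B (A i) w / s) with hc
      have hc0 : 0 ≤ c := by
        have h1 : 0 < B b w / s := div_pos hbw hLw
        have h2 : ∀ i, μ i * (B (A i) w / s) ≤ 0 :=
          fun i => mul_nonpos_of_nonneg_of_nonpos (hμ0 i)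
            (div_nonpos_of_nonpos_of_nonneg (hw i) hLw.le)
        have h3 : ∑ i, μ i * (B (A i) w / s) ≤ 0 := Finset.sum_nonpos fun i _ => h2 i
        rw [hc]; linarith
      refine ⟨Fin.snoc μ c, ?_, ?_⟩
      · intro i
        refine Fin.lastCases ?_ ?_ i
        · simpa using hc0
        · intro j; simpa using hμ0 j
      · rw [Fin.sum_univ_castSucc]
        have e2 : ∀ j : Fin m, (Fin.snoc μ c : Fin (m+1) → ℝ) (Fin.castSucc j) • a (Fin.castSucc j) = μ j • A j := by
          intro j; rw [Fin.snoc_castSucc, hA]; rfl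
        rw [Finset.sum_congr rfl (fun j _ => e2 j)]
        have e3 : (Fin.snoc μ c : Fin (m+1) → ℝ) (Fin.last m) • a (Fin.last m) = c • aL := by
          rw [Fin.snoc_last, haL]
        rw [e3]
        have e4 : b = b' + (B b w / s) • aL := by rw [hb']; abel
        rw [e4, hμ]
        have e5 : ∀ i : Fin m, μ i • A' i = μ i • A i - (μ i * (B (A i) w / s)) • aL := by
          intro i
          rw [hA', smul_sub, smul_smul]
        rw [Finset.sum_congr rfl (fun i _ => e5 i), Finset.sum_sub_distrib, ← Finset.sum_smul, hc,
          sub_smul]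
        abel
    · push_neg at hex
      have key : ∀ v, (∀ i, B (A i) v ≤ 0) → B b v ≤ 0 := by
        intro v hv
        by_contra h
        push_neg at h
        exact absurd h (not_lt.mpr (le_of_not_gt (fun hh => (not_lt.mpr (hex v hv)) hh)))
      obtain ⟨μ, hμ0, hμ⟩ := ih A b key
      refine ⟨Fin.snoc μ 0, ?_, ?_⟩
      · intro i
        refine Fin.lastCases ?_ ?_ i
        · simp
        · intro j; simpa using hμ0 j
      · rw [Fin.sum_univ_castSucc]
        simp only [Fin.snoc_castSucc, Fin.snoc_last, zero_smul, add_zero]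
        exact hμ

/-- Finset-indexed version of Farkas. -/
theorem myFarkas_finset (B : E → E → ℝ)
    (hadd : ∀ x y v, B (x + y) v = B x v + B y v)
    (hsmul : ∀ (c : ℝ) x v, B (c • x) v = c * B x v)
    (hsymm : ∀ x y, B x y = B y x)
    (hdef : ∀ x, B x x ≤ 0 → x = 0)
    {ι : Type*} [DecidableEq ι] (s : Finset ι) (a : ι → E) (b : E)
    (hb : ∀ v, (∀ i ∈ s, B (a i) v ≤ 0) → B b v ≤ 0) :
    ∃ μ : ι → ℝ, (∀ i, 0 ≤ μ i) ∧ (∀ i ∉ s, μ i = 0) ∧ b = ∑ i ∈ s, μ i • (a i) := by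
  classical
  obtain ⟨μ, hμ0, hμ⟩ := myFarkas B hadd hsmul hsymm hdef s.card (fun i => a (s.equivFin.symm i)) b
    (by
      intro v hv
      refine hb v ?_
      intro i hi
      have := hv (s.equivFin ⟨i, hi⟩)
      simpa using this)
  refine ⟨fun i => if h : i ∈ s then μ (s.equivFin ⟨i, h⟩) else 0, ?_, ?_, ?_⟩
  · intro i
    by_cases h : i ∈ s
    · simp only [dif_pos h]; exact hμ0 _
    · simp [dif_neg h]
  · intro i h; simp [dif_neg h]
  · rw [hμ, ← Finset.sum_coe_sort s (fun i => (if h : i ∈ s then μ (s.equivFin ⟨i, h⟩) else 0) • a i)]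
    refine Fintype.sum_equiv s.equivFin.symm _ _ ?_
    intro i
    simp

end Farkas

open Complex Finset Filter Topology

/-- The product over all ordered pairs `(i,j)` with `i ≠ j` of `dist (z i) (z j)`. -/
noncomputable def Delta (n : ℕ) (z : Fin n → ℂ) : ℝ :=
  ∏ p ∈ Finset.univ.filter (fun p : Fin n × Fin n => p.1 ≠ p.2), dist (z p.1) (z p.2)

/-- `z` is admissible if all pairwise distances are at most 2. -/
def Admissible (n : ℕ) (z : Fin n → ℂ) : Prop :=
  ∀ i j, dist (z i) (z j) ≤ 2

/-- KKT necessary conditions for a local maximizer of `Δ` on the feasible set. -/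
theorem stmt9 (n : ℕ) (z : Fin n → ℂ) (hinj : Function.Injective z)
    (hadm : Admissible n z)
    (hloc : IsLocalMaxOn (Delta n)
      {w : Fin n → ℂ | ∀ i j, dist (w i) (w j) ≤ 2} z) :
    ∃ lam : Fin n → Fin n → ℝ,
      (∀ i j, lam i j = lam j i) ∧
      (∀ i j, 0 ≤ lam i j) ∧
      (∀ i j, dist (z i) (z j) < 2 → lam i j = 0) ∧
      ∀ k : Fin n,
        ∑ j ∈ Finset.univ.filter (fun j : Fin n => j ≠ k), (z j - z k)⁻¹ =
        ∑ j ∈ Finset.univ.filter (fun j : Fin n => j ≠ k),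
          (lam k j : ℂ) * ((starRingEnd ℂ) (z j) - (starRingEnd ℂ) (z k)) := by
  classical
  set P : Finset (Fin n × Fin n) :=
    Finset.univ.filter (fun p : Fin n × Fin n => p.1 ≠ p.2) with hPdef
  set Nf : Fin n × Fin n → ℝ := fun p => Complex.normSq (z p.1 - z p.2) with hNfdef
  set F : (Fin n → ℂ) → ℝ := fun w => ∏ p ∈ P, Complex.normSq (w p.1 - w p.2) with hFdef
  set A : Finset (Fin n × Fin n) := P.filter (fun p => dist (z p.1) (z p.2) = 2) with hAdef
  set d : Fin n × Fin n → (Fin n → ℂ) := fun p k =>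
    (if k = p.1 then z p.1 - z p.2 else 0) - (if k = p.2 then z p.1 - z p.2 else 0) with hddef
  set G : Fin n → ℂ := fun k => ∑ j ∈ Finset.univ.filter (fun j : Fin n => j ≠ k),
    (4 * ∏ q ∈ P.erase (k, j), Nf q) • (z k - z j) with hGdef
  have hPmem : ∀ p : Fin n × Fin n, p ∈ P ↔ p.1 ≠ p.2 := by
    intro p; simp [hPdef]
  have hNpos : ∀ p ∈ P, 0 < Nf p := by
    intro p hp
    have : z p.1 ≠ z p.2 := fun h => (hPmem p).mp hp (hinj h)
    simp only [hNfdef]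
    exact Complex.normSq_pos.mpr (sub_ne_zero.mpr this)
  have hFzeq : F z = ∏ p ∈ P, Nf p := rfl
  have hFpos : 0 < F z := by
    rw [hFzeq]; exact Finset.prod_pos hNpos
  have herase : ∀ p ∈ P, (∏ q ∈ P.erase p, Nf q) * Nf p = F z := by
    intro p hp; rw [hFzeq]; exact Finset.prod_erase_mul _ _ hp
  have heraserpos : ∀ p ∈ P, 0 < ∏ q ∈ P.erase p, Nf q := by
    intro p hp
    exact Finset.prod_pos (fun q hq => hNpos q (Finset.mem_of_mem_erase hq))
  -- `d` pairing formula
  have hBd : ∀ (p : Fin n × Fin n) (v : Fin n → ℂ),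
      Bform n (d p) v = ((starRingEnd ℂ) (z p.1 - z p.2) * (v p.1 - v p.2)).re := by
    intro p v
    unfold Bform
    have hterm : ∀ k : Fin n, ((starRingEnd ℂ) (d p k) * v k).re =
        (if k = p.1 then ((starRingEnd ℂ) (z p.1 - z p.2) * v k).re else 0)
          - (if k = p.2 then ((starRingEnd ℂ) (z p.1 - z p.2) * v k).re else 0) := by
      intro k
      by_cases h1 : k = p.1
      · by_cases h2 : k = p.2
        · have hpp : p.1 = p.2 := h1.symm.trans h2
          simp [hddef, h1, h2, hpp, sub_self]
        · have hne : p.1 ≠ p.2 := fun h => h2 (h1.trans h)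
          simp [hddef, h1, h2, hne]
      · by_cases h2 : k = p.2
        · have hne : p.2 ≠ p.1 := fun h => h1 (h2.trans h)
          simp [hddef, h1, h2, hne, hne.symm]
          ring
        · simp [hddef, h1, h2]
    rw [Finset.sum_congr rfl (fun k _ => hterm k), Finset.sum_sub_distrib,
      Finset.sum_ite_eq' Finset.univ p.1, Finset.sum_ite_eq' Finset.univ p.2]
    simp [mul_sub]
  -- gradient pairing formula
  have hNswap : ∀ p : Fin n × Fin n, Nf p.swap = Nf p := by
    intro p
    simp only [hNfdef, Prod.fst_swap, Prod.snd_swap]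
    rw [← Complex.normSq_neg]; ring_nf
  have hPswap : ∀ p : Fin n × Fin n, p ∈ P → p.swap ∈ P := by
    intro p hp
    rw [hPmem] at hp ⊢
    simpa [ne_comm] using hp.symm
  have hwswap : ∀ p ∈ P, (∏ q ∈ P.erase p.swap, Nf q) = ∏ q ∈ P.erase p, Nf q := by
    intro p hp
    have h1 := herase p hp
    have h2 := herase p.swap (hPswap p hp)
    rw [hNswap] at h2
    exact mul_right_cancel₀ (hNpos p hp).ne' (h2.trans h1.symm)
  have hBG : ∀ v : Fin n → ℂ, Bform n G v =
      ∑ p ∈ P, (∏ q ∈ P.erase p, Nf q) • (2 * ((starRingEnd ℂ) (z p.1 - z p.2) * (v p.1 - v p.2)).re) := by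
    intro v
    -- RHS = ∑ p ∈ P, 4 * w p * re(conj a_p * v p.1)
    have hsplit : ∀ p : Fin n × Fin n,
        (∏ q ∈ P.erase p, Nf q) • (2 * ((starRingEnd ℂ) (z p.1 - z p.2) * (v p.1 - v p.2)).re)
        = (2 * ∏ q ∈ P.erase p, Nf q) * ((starRingEnd ℂ) (z p.1 - z p.2) * v p.1).re
          - (2 * ∏ q ∈ P.erase p, Nf q) * ((starRingEnd ℂ) (z p.1 - z p.2) * v p.2).re := by
      intro p
      rw [mul_sub, Complex.sub_re, smul_eq_mul]
      ring
    rw [Finset.sum_congr rfl (fun p _ => hsplit p), Finset.sum_sub_distrib]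
    have hswapsum : ∑ p ∈ P, (2 * ∏ q ∈ P.erase p, Nf q) * ((starRingEnd ℂ) (z p.1 - z p.2) * v p.2).re
        = - ∑ p ∈ P, (2 * ∏ q ∈ P.erase p, Nf q) * ((starRingEnd ℂ) (z p.1 - z p.2) * v p.1).re := by
      rw [← Finset.sum_neg_distrib]
      refine Finset.sum_nbij' (fun p => p.swap) (fun p => p.swap) ?_ ?_ ?_ ?_ ?_
      · intro p hp; exact hPswap p hp
      · intro p hp; exact hPswap p hp
      · intro p _; simp
      · intro p _; simp
      · intro p hp
        rw [hwswap p hp]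
        simp only [Prod.fst_swap, Prod.snd_swap]
        have : z p.2 - z p.1 = -(z p.1 - z p.2) := by ring
        rw [this, map_neg, neg_mul, Complex.neg_re]
        ring
    rw [hswapsum, sub_neg_eq_add, ← two_mul]
    -- LHS
    unfold Bform
    have hGk : ∀ k : Fin n, ((starRingEnd ℂ) (G k) * v k).re
        = ∑ j ∈ Finset.univ.filter (fun j : Fin n => j ≠ k),
            (4 * ∏ q ∈ P.erase (k, j), Nf q) * ((starRingEnd ℂ) (z k - z j) * v k).re := by
      intro k
      rw [hGdef]
      simp only [map_sum, Finset.sum_mul, Complex.re_sum]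
      refine Finset.sum_congr rfl fun j _ => ?_
      rw [Complex.real_smul, map_mul, Complex.conj_ofReal]
      rw [mul_assoc, Complex.re_ofReal_mul]
    rw [Finset.sum_congr rfl (fun k _ => hGk k)]
    -- now identify double sum with sum over P
    rw [Finset.mul_sum]
    rw [hPdef, Finset.sum_filter, Fintype.sum_prod_type]
    refine Finset.sum_congr rfl fun k _ => ?_
    rw [Finset.sum_filter]
    refine Finset.sum_congr rfl fun j _ => ?_
    by_cases h : j = k
    · simp [h]
    · simp only [if_pos (show (k, j).1 ≠ (k, j).2 from by simpa using Ne.symm h), if_pos h]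
      rw [← hPdef]
      have hkj : ((k, j) : Fin n × Fin n) ∈ P := by rw [hPmem]; simpa using Ne.symm h
      have := herase _ hkj
      ring
  -- local max of F
  have hFDelta : ∀ w : Fin n → ℂ, F w = (Delta n w) ^ 2 := by
    intro w
    rw [hFdef, Delta, ← Finset.prod_pow, ← hPdef]
    refine Finset.prod_congr rfl fun p _ => ?_
    rw [Complex.dist_eq, Complex.sq_norm]
  have hlocF : ∀ᶠ w in 𝓝[{w : Fin n → ℂ | ∀ i j, dist (w i) (w j) ≤ 2}] z, F w ≤ F z := by
    have hD : ∀ᶠ w in 𝓝[{w : Fin n → ℂ | ∀ i j, dist (w i) (w j) ≤ 2}] z,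
        Delta n w ≤ Delta n z := hloc
    filter_upwards [hD] with w hw
    rw [hFDelta, hFDelta]
    have h0 : 0 ≤ Delta n w := Finset.prod_nonneg fun p _ => dist_nonneg
    exact pow_le_pow_left₀ h0 hw 2
  -- Farkas hypothesis
  have hAmem : ∀ p : Fin n × Fin n, p ∈ A ↔ p ∈ P ∧ dist (z p.1) (z p.2) = 2 := by
    intro p; simp [hAdef]
  have hyp : ∀ v : Fin n → ℂ, (∀ p ∈ A, Bform n (d p) v ≤ 0) → Bform n G v ≤ 0 := by
    intro v hv
    by_contra hlt
    push_neg at hlt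
    set u : Fin n → ℂ := fun k => -(z k) with hudef
    have hdu : ∀ p ∈ A, Bform n (d p) u = -4 := by
      intro p hp
      obtain ⟨hpP, hpd⟩ := (hAmem p).mp hp
      rw [hBd]
      have h1 : u p.1 - u p.2 = -(z p.1 - z p.2) := by rw [hudef]; ring
      rw [h1, mul_neg, Complex.neg_re, mul_comm, Complex.mul_conj]
      have := dist_eq_two_normSq hpd
      simp [this]
    set ε : ℝ := Bform n G v / (2 * (|Bform n G u| + 1)) with hεdef
    have hε : 0 < ε := div_pos hlt (by positivity)
    set v' : Fin n → ℂ := v + ε • u with hv'def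
    have hBright : ∀ x : Fin n → ℂ, Bform n x v' = Bform n x v + ε * Bform n x u := by
      intro x
      rw [hv'def, Bform_add_right, Bform_smul_right]
    have hGv' : 0 < Bform n G v' := by
      rw [hBright]
      have h2 : ε * (|Bform n G u| + 1) = Bform n G v / 2 := by
        rw [hεdef]; field_simp
      nlinarith [neg_abs_le (Bform n G u), abs_nonneg (Bform n G u)]
    have hdv' : ∀ p ∈ A, Bform n (d p) v' ≤ -(4 * ε) := by
      intro p hp
      rw [hBright, hdu p hp]
      have := hv p hp
      nlinarith
    -- the curve
    set c : ℝ → Fin n → ℂ := fun t k => z k + (t : ℂ) * v' k with hcdef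
    have hcdiff : ∀ (i j : Fin n) (t : ℝ), c t i - c t j = (z i - z j) + (t : ℂ) * (v' i - v' j) := by
      intro i j t; rw [hcdef]; ring
    have hfeas : ∀ᶠ t in 𝓝[>] (0 : ℝ),
        c t ∈ {w : Fin n → ℂ | ∀ i j, dist (w i) (w j) ≤ 2} := by
      have : ∀ i j : Fin n, ∀ᶠ t in 𝓝[>] (0 : ℝ), dist (c t i) (c t j) ≤ 2 := by
        intro i j
        by_cases hij : i = j
        · subst hij
          exact Filter.Eventually.of_forall fun t => by simp
        · have hijP : ((i, j) : Fin n × Fin n) ∈ P := (hPmem _).mpr hij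
          have hkey : ∀ t : ℝ, dist (c t i) (c t j) ≤ 2 ↔
              Complex.normSq ((z i - z j) + (t : ℂ) * (v' i - v' j)) ≤ 4 := by
            intro t
            rw [dist_le_two_iff, hcdiff]
          by_cases hact : ((i, j) : Fin n × Fin n) ∈ A
          · have hr : ((starRingEnd ℂ) (z i - z j) * (v' i - v' j)).re ≤ -(4 * ε) := by
              have := hdv' _ hact
              rwa [hBd] at this
            have hN4 : Complex.normSq (z i - z j) = 4 :=
              dist_eq_two_normSq (((hAmem _).mp hact).2)
            set nb : ℝ := Complex.normSq (v' i - v' j) with hnb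
            have hδ : 0 < 8 * ε / (nb + 1) := by
              have h0 : (0:ℝ) ≤ nb := Complex.normSq_nonneg _
              exact div_pos (by linarith) (by linarith)
            filter_upwards [Ioo_mem_nhdsGT hδ] with t ht
            rw [hkey, normSq_line, hN4]
            have ht1 : 0 < t := ht.1
            have ht2 : t * (nb + 1) < 8 * ε := by
              have h0 : (0:ℝ) ≤ nb := Complex.normSq_nonneg _
              have hpos : 0 < nb + 1 := by linarith
              calc t * (nb + 1) < (8 * ε / (nb + 1)) * (nb + 1) := by
                    exact mul_lt_mul_of_pos_right ht.2 hpos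
                _ = 8 * ε := by field_simp
            have hnb0 : 0 ≤ nb := Complex.normSq_nonneg _
            nlinarith [sq_nonneg t, mul_le_mul_of_nonneg_left hr (le_of_lt ht1)]
          · have hlt2 : dist (z i) (z j) < 2 :=
              lt_of_le_of_ne (hadm i j) (fun h => hact ((hAmem _).mpr ⟨hijP, h⟩))
            have h4 : Complex.normSq (z i - z j) < 4 := dist_lt_two_normSq hlt2
            have hqeq : (fun t : ℝ => Complex.normSq ((z i - z j) + (t : ℂ) * (v' i - v' j)))
                = fun t : ℝ => Complex.normSq (z i - z j)
                  + (2 * ((starRingEnd ℂ) (z i - z j) * (v' i - v' j)).re) * t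
                  + Complex.normSq (v' i - v' j) * t ^ 2 := funext fun t => normSq_line _ _ t
            have hcont : ContinuousAt
                (fun t : ℝ => Complex.normSq ((z i - z j) + (t : ℂ) * (v' i - v' j))) 0 := by
              rw [hqeq]
              fun_prop
            have hat0 : (fun t : ℝ => Complex.normSq ((z i - z j) + (t : ℂ) * (v' i - v' j))) 0
                < 4 := by simpa using h4
            have hev : ∀ᶠ t : ℝ in 𝓝 0,
                Complex.normSq ((z i - z j) + ((t : ℝ) : ℂ) * (v' i - v' j)) < 4 :=
              hcont.eventually_lt_const hat0
            refine Filter.Eventually.filter_mono nhdsWithin_le_nhds ?_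
            filter_upwards [hev] with t ht
            rw [hkey]
            exact le_of_lt ht
      have h2 := Filter.eventually_all.mpr fun i : Fin n =>
        Filter.eventually_all.mpr fun j : Fin n => this i j
      filter_upwards [h2] with t ht
      exact ht
    -- derivative of F along the curve
    have hderiv : HasDerivAt (fun t : ℝ => F (c t)) (Bform n G v') 0 := by
      have h1 : ∀ p ∈ P, HasDerivAt
          (fun t : ℝ => Complex.normSq ((z p.1 - z p.2) + (t : ℂ) * (v' p.1 - v' p.2)))
          (2 * ((starRingEnd ℂ) (z p.1 - z p.2) * (v' p.1 - v' p.2)).re) 0 :=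
        fun p _ => hasDerivAt_normSq_line _ _
      have h2 := HasDerivAt.finset_prod h1
      have h3 : (fun t : ℝ => F (c t)) = fun t : ℝ =>
          ∏ p ∈ P, Complex.normSq ((z p.1 - z p.2) + (t : ℂ) * (v' p.1 - v' p.2)) := by
        funext t
        rw [hFdef]
        exact Finset.prod_congr rfl fun p _ => by rw [hcdiff]
      rw [h3, hBG]
      convert h2 using 2 with p hp
      · rfl
      · rfl
      · simp [Finset.prod_apply]
      rw [Finset.prod_congr rfl (fun q hq => ?_)]
      simp [hNfdef]
    have hc0 : c 0 = z := by funext k; simp [hcdef]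
    have hinc : ∀ᶠ t in 𝓝[>] (0 : ℝ), F z < F (c t) := by
      have hslope : Filter.Tendsto (slope (fun t : ℝ => F (c t)) 0) (𝓝[≠] (0:ℝ))
          (𝓝 (Bform n G v')) := hasDerivAt_iff_tendsto_slope.mp hderiv
      have hmono : 𝓝[>] (0:ℝ) ≤ 𝓝[≠] (0:ℝ) :=
        nhdsWithin_mono 0 (fun t ht => ne_of_gt ht)
      have hev : ∀ᶠ t in 𝓝[>] (0:ℝ), 0 < slope (fun t : ℝ => F (c t)) 0 t :=
        (hslope.mono_left hmono).eventually_const_lt hGv'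
      filter_upwards [hev, self_mem_nhdsWithin] with t hst ht
      have ht0 : (0:ℝ) < t := ht
      rw [slope_def_field] at hst
      have h3 : (F (c t) - F (c 0)) / (t - 0) * (t - 0) = F (c t) - F (c 0) :=
        div_mul_cancel₀ _ (by linarith)
      have h4 := mul_pos hst (by linarith : (0:ℝ) < t - 0)
      rw [h3, hc0] at h4
      linarith
    have htend : Filter.Tendsto c (𝓝[>] (0 : ℝ))
        (𝓝[{w : Fin n → ℂ | ∀ i j, dist (w i) (w j) ≤ 2}] z) := by
      rw [tendsto_nhdsWithin_iff]
      constructor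
      · have hcont : Filter.Tendsto c (𝓝 (0 : ℝ)) (𝓝 z) := by
          rw [tendsto_pi_nhds]
          intro k
          have : Filter.Tendsto (fun t : ℝ => z k + (t : ℂ) * v' k) (𝓝 0) (𝓝 (z k + (0:ℂ) * v' k)) := by
            apply Filter.Tendsto.const_add
            exact (Complex.continuous_ofReal.mul continuous_const).tendsto' 0 _ (by simp) |>.congr (fun t => rfl)
          simpa using this
        exact hcont.mono_left nhdsWithin_le_nhds
      · exact hfeas
    have hmax : ∀ᶠ t in 𝓝[>] (0 : ℝ), F (c t) ≤ F z := htend.eventually hlocF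
    obtain ⟨t, h1, h2⟩ := (hinc.and hmax).exists
    linarith
  obtain ⟨μ, hμ0, hμA, hrep⟩ := myFarkas_finset (Bform n) (Bform_add_left n) (Bform_smul_left n)
    (Bform_symm n) (Bform_def n) A d G hyp
  -- component extraction
  have hcomp : ∀ k : Fin n,
      G k = ∑ j ∈ Finset.univ.filter (fun j : Fin n => j ≠ k),
        ((μ (k, j) + μ (j, k))) • (z k - z j) := by
    intro k
    have h1 : G k = ∑ p ∈ A, μ p • d p k := by
      rw [hrep]
      simp [Finset.sum_apply]
    have hAP : A ⊆ P := Finset.filter_subset _ _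
    have h2 : ∑ p ∈ A, μ p • d p k = ∑ p ∈ P, μ p • d p k := by
      refine Finset.sum_subset hAP fun p hp hnp => ?_
      rw [hμA p hnp, zero_smul]
    have hterm : ∀ p : Fin n × Fin n, μ p • d p k
        = (if k = p.1 then μ p • (z p.1 - z p.2) else 0)
          - (if k = p.2 then μ p • (z p.1 - z p.2) else 0) := by
      intro p
      rw [hddef]
      by_cases h1 : k = p.1 <;> by_cases h2 : k = p.2 <;> simp [h1, h2, smul_sub]
    have h3 : ∑ p ∈ P, μ p • d p k
        = (∑ p ∈ P.filter (fun p => k = p.1), μ p • (z p.1 - z p.2))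
          - ∑ p ∈ P.filter (fun p => k = p.2), μ p • (z p.1 - z p.2) := by
      rw [Finset.sum_congr rfl (fun p _ => hterm p), Finset.sum_sub_distrib,
        ← Finset.sum_filter, ← Finset.sum_filter]
    have e1 : ∑ p ∈ P.filter (fun p => k = p.1), μ p • (z p.1 - z p.2)
        = ∑ j ∈ Finset.univ.filter (fun j : Fin n => j ≠ k), μ (k, j) • (z k - z j) := by
      refine Finset.sum_nbij' (fun p => p.2) (fun j => (k, j)) ?_ ?_ ?_ ?_ ?_
      · intro p hp
        rw [Finset.mem_filter] at hp
        obtain ⟨hpP, hpk⟩ := hp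
        rw [hPmem] at hpP
        simp only [Finset.mem_filter, Finset.mem_univ, true_and]
        intro h
        refine hpP ?_
        rw [← hpk, ← h]
      · intro j hj
        have hjk : j ≠ k := by simpa using hj
        rw [Finset.mem_filter]
        exact ⟨(hPmem _).mpr (fun h => hjk (by simpa using h.symm)), rfl⟩
      · intro p hp
        rw [Finset.mem_filter] at hp
        have : p.1 = k := hp.2.symm
        exact Prod.ext this.symm rfl
      · intro j hj; rfl
      · intro p hp
        rw [Finset.mem_filter] at hp
        obtain ⟨p1, p2⟩ := p
        obtain ⟨-, hk1⟩ := hp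
        simp only at hk1 ⊢
        subst hk1
        rfl
    have e2 : ∑ p ∈ P.filter (fun p => k = p.2), μ p • (z p.1 - z p.2)
        = ∑ j ∈ Finset.univ.filter (fun j : Fin n => j ≠ k), μ (j, k) • (z j - z k) := by
      refine Finset.sum_nbij' (fun p => p.1) (fun j => (j, k)) ?_ ?_ ?_ ?_ ?_
      · intro p hp
        rw [Finset.mem_filter] at hp
        obtain ⟨hpP, hpk⟩ := hp
        rw [hPmem] at hpP
        simp only [Finset.mem_filter, Finset.mem_univ, true_and]
        intro h
        refine hpP ?_
        rw [h, ← hpk]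
      · intro j hj
        have hjk : j ≠ k := by simpa using hj
        rw [Finset.mem_filter]
        exact ⟨(hPmem _).mpr (fun h => hjk (by simpa using h)), rfl⟩
      · intro p hp
        rw [Finset.mem_filter] at hp
        have : p.2 = k := hp.2.symm
        exact Prod.ext rfl this.symm
      · intro j hj; rfl
      · intro p hp
        rw [Finset.mem_filter] at hp
        obtain ⟨p1, p2⟩ := p
        obtain ⟨-, hk1⟩ := hp
        simp only at hk1 ⊢
        subst hk1
        rfl
    rw [h1, h2, h3, e1, e2, ← Finset.sum_sub_distrib]
    refine Finset.sum_congr rfl fun j _ => ?_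
    rw [show z j - z k = -(z k - z j) by ring, smul_neg, sub_neg_eq_add, ← add_smul]
  refine ⟨fun i j => (μ (i, j) + μ (j, i)) / (4 * F z), ?_, ?_, ?_, ?_⟩
  · intro i j; ring_nf
  · intro i j
    exact div_nonneg (add_nonneg (hμ0 _) (hμ0 _)) (by linarith)
  · intro i j hij
    have h1 : (i, j) ∉ A := by
      simp only [hAdef, Finset.mem_filter]
      rintro ⟨-, h⟩; exact absurd h (ne_of_lt hij)
    have h2 : (j, i) ∉ A := by
      simp only [hAdef, Finset.mem_filter]
      rintro ⟨-, h⟩; rw [dist_comm] at h; exact absurd h (ne_of_lt hij)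
    show (μ (i, j) + μ (j, i)) / (4 * F z) = 0
    rw [hμA _ h1, hμA _ h2]; norm_num
  · intro k
    show ∑ j ∈ Finset.univ.filter (fun j : Fin n => j ≠ k), (z j - z k)⁻¹ =
      ∑ j ∈ Finset.univ.filter (fun j : Fin n => j ≠ k),
        (((μ (k, j) + μ (j, k)) / (4 * F z) : ℝ) : ℂ)
          * ((starRingEnd ℂ) (z j) - (starRingEnd ℂ) (z k))
    have hk := hcomp k
    rw [hGdef] at hk
    simp only [] at hk
    have hstep : ∀ j ∈ Finset.univ.filter (fun j : Fin n => j ≠ k),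
        (starRingEnd ℂ) ((4 * ∏ q ∈ P.erase (k, j), Nf q) • (z k - z j))
          = ((4 * F z : ℝ) : ℂ) * (z k - z j)⁻¹ := by
      intro j hj
      have hjk : j ≠ k := by simpa using hj
      have hkjP : ((k, j) : Fin n × Fin n) ∈ P := (hPmem _).mpr (by simpa using Ne.symm hjk)
      have hzz : z k - z j ≠ 0 := sub_ne_zero.mpr (fun h => (Ne.symm hjk) (hinj h))
      have hN0 : Complex.normSq (z k - z j) ≠ 0 := (Complex.normSq_pos.mpr hzz).ne'
      rw [Complex.real_smul, map_mul, Complex.conj_ofReal]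
      have hconjeq : (starRingEnd ℂ) (z k - z j)
          = ((Complex.normSq (z k - z j) : ℝ) : ℂ) * (z k - z j)⁻¹ := by
        have hrw : ((Complex.normSq (z k - z j) : ℝ) : ℂ) * (z k - z j)⁻¹
            = (starRingEnd ℂ) (z k - z j) := by
          rw [Complex.inv_def, ← mul_assoc,
            mul_comm ((Complex.normSq (z k - z j) : ℝ) : ℂ) ((starRingEnd ℂ) (z k - z j)),
            mul_assoc, ← Complex.ofReal_mul, mul_inv_cancel₀ hN0]
          simp
        exact hrw.symm
      rw [hconjeq, ← mul_assoc, ← Complex.ofReal_mul]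
      have hcoef : (4 * ∏ q ∈ P.erase (k, j), Nf q) * Complex.normSq (z k - z j) = 4 * F z := by
        have h := herase _ hkjP
        have : Nf (k, j) = Complex.normSq (z k - z j) := by rw [hNfdef]
        rw [← this, mul_assoc, h]
      rw [hcoef]
    have hL : (starRingEnd ℂ) (∑ j ∈ Finset.univ.filter (fun j : Fin n => j ≠ k),
          (4 * ∏ q ∈ P.erase (k, j), Nf q) • (z k - z j))
        = ((4 * F z : ℝ) : ℂ) * ∑ j ∈ Finset.univ.filter (fun j : Fin n => j ≠ k),
            (z k - z j)⁻¹ := by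
      rw [map_sum, Finset.sum_congr rfl hstep, Finset.mul_sum]
    have hR : (starRingEnd ℂ) (∑ j ∈ Finset.univ.filter (fun j : Fin n => j ≠ k),
          ((μ (k, j) + μ (j, k))) • (z k - z j))
        = ∑ j ∈ Finset.univ.filter (fun j : Fin n => j ≠ k),
            (((μ (k, j) + μ (j, k)) : ℝ) : ℂ) * ((starRingEnd ℂ) (z k) - (starRingEnd ℂ) (z j)) := by
      rw [map_sum]
      refine Finset.sum_congr rfl fun j _ => ?_
      rw [Complex.real_smul, map_mul, Complex.conj_ofReal, map_sub]
    have heq : ((4 * F z : ℝ) : ℂ) * ∑ j ∈ Finset.univ.filter (fun j : Fin n => j ≠ k),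
          (z k - z j)⁻¹
        = ∑ j ∈ Finset.univ.filter (fun j : Fin n => j ≠ k),
            (((μ (k, j) + μ (j, k)) : ℝ) : ℂ) * ((starRingEnd ℂ) (z k) - (starRingEnd ℂ) (z j)) := by
      rw [← hL, ← hR, hk]
    have h4F : ((4 * F z : ℝ) : ℂ) ≠ 0 := by
      exact_mod_cast ne_of_gt (by linarith : (0:ℝ) < 4 * F z)
    refine mul_left_cancel₀ h4F ?_
    rw [Finset.mul_sum, Finset.mul_sum]
    calc ∑ j ∈ Finset.univ.filter (fun j : Fin n => j ≠ k), ((4 * F z : ℝ) : ℂ) * (z j - z k)⁻¹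
        = -∑ j ∈ Finset.univ.filter (fun j : Fin n => j ≠ k),
            ((4 * F z : ℝ) : ℂ) * (z k - z j)⁻¹ := by
          rw [← Finset.sum_neg_distrib]
          refine Finset.sum_congr rfl fun j _ => ?_
          rw [show z j - z k = -(z k - z j) by ring, inv_neg, mul_neg]
      _ = -∑ j ∈ Finset.univ.filter (fun j : Fin n => j ≠ k),
            (((μ (k, j) + μ (j, k)) : ℝ) : ℂ) * ((starRingEnd ℂ) (z k) - (starRingEnd ℂ) (z j)) := by
          rw [← Finset.mul_sum, heq]
      _ = ∑ j ∈ Finset.univ.filter (fun j : Fin n => j ≠ k),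
            (((μ (k, j) + μ (j, k)) : ℝ) : ℂ) * ((starRingEnd ℂ) (z j) - (starRingEnd ℂ) (z k)) := by
          rw [← Finset.sum_neg_distrib]
          exact Finset.sum_congr rfl fun j _ => by ring
      _ = ∑ j ∈ Finset.univ.filter (fun j : Fin n => j ≠ k),
            ((4 * F z : ℝ) : ℂ) * ((((μ (k, j) + μ (j, k)) / (4 * F z) : ℝ) : ℂ)
              * ((starRingEnd ℂ) (z j) - (starRingEnd ℂ) (z k))) := by
          refine Finset.sum_congr rfl fun j _ => ?_
          rw [Complex.ofReal_div, ← mul_assoc]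
          congr 1
          rw [mul_comm, div_mul_cancel₀ _ h4F]
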